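/- Let n ≥ 3, 0 < m < (n-2)/n, m ≠ (n-2)/(n+2), β > 0. Suppose h : ℝ → ℝ is C² and satisfies h'' + (2(n-2-nm)/(1-m)·s + (β/(n-1))h + (n-2-(n+2)m)/(1-m))·h' = G(s) − b₀, where G(s) → 0 as s → ∞, b₀ = 2(n-1)(n-2-nm)(n-2-(n+2)m)/((1-m)²β), and h'(s) → 0, h(s)/s → 0 as s → ∞. Then h(s)/log s → −(n-1)(n-2-(n+2)m)/((1-m)β) and s·h'(s) → −(n-1)(n-2-(n+2)m)/((1-m)β) as s → ∞. -/

import Mathlib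

open Filter Real

open Set in

lemma anti_aux (w : ℝ → ℝ) (hw : Differentiable ℝ w) {A B : ℝ}
    (hd : ∀ x ∈ Set.Ioo A B, deriv w x ≤ -1) (hAB : A ≤ B) : w B ≤ w A + (A - B) := by
  have hanti : AntitoneOn (fun s => w s + s) (Set.Icc A B) := by
    apply antitoneOn_of_deriv_nonpos (convex_Icc A B)
    · exact (hw.continuous.add continuous_id).continuousOn
    · exact (hw.add differentiable_id).differentiableOn
    · intro x hx
      rw [interior_Icc] at hx
      have h1 : deriv (fun s => w s + s) x = deriv w x + 1 := by
        rw [deriv_fun_add (hw x) differentiableAt_fun_id]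
        simp
      rw [h1]
      linarith [hd x hx]
  have := hanti (Set.left_mem_Icc.mpr hAB) (Set.right_mem_Icc.mpr hAB) hAB
  simp only [] at this
  linarith

lemma barrier (w : ℝ → ℝ) (hw : Differentiable ℝ w) (S : ℝ)
    (hd : ∀ s, S ≤ s → 0 ≤ w s → deriv w s ≤ -1) :
    ∀ᶠ s in atTop, w s ≤ 0 := by
  -- Step A: find a point where w ≤ 0
  obtain ⟨s₁, hs₁S, hs₁⟩ : ∃ s₁, S ≤ s₁ ∧ w s₁ ≤ 0 := by
    by_contra hcon
    push_neg at hcon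
    have hwS : 0 < w S := hcon S le_rfl
    set T := S + w S + 1 with hT
    have hST : S ≤ T := by linarith
    have hwT : w T ≤ w S + (S - T) := by
      apply anti_aux w hw _ hST
      intro x hx
      exact hd x (le_of_lt hx.1) (le_of_lt (hcon x (le_of_lt hx.1)))
    have := hcon T hST
    simp only [hT] at hwT
    linarith
  -- Step B: w stays ≤ 0 afterwards
  rw [eventually_atTop]
  refine ⟨s₁, fun s hs => ?_⟩
  by_contra hws
  push_neg at hws
  set A := Set.Icc s₁ s ∩ w ⁻¹' (Set.Iic 0) with hA
  have hAne : A.Nonempty := ⟨s₁, Set.left_mem_Icc.mpr hs, by simpa using hs₁⟩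
  have hAc : IsCompact A := isCompact_Icc.inter_right (isClosed_Iic.preimage hw.continuous)
  have hs₃mem : IsGreatest A (sSup A) := hAc.isGreatest_sSup hAne
  set s₃ := sSup A with hs₃def
  obtain ⟨⟨⟨hs₁s₃, hs₃s⟩, hws₃⟩, hub⟩ := hs₃mem
  simp only [Set.mem_preimage, Set.mem_Iic] at hws₃
  have hpos : ∀ t ∈ Set.Ioo s₃ s, 0 < w t := by
    intro t ht
    by_contra hwt
    push_neg at hwt
    have : t ∈ A := ⟨⟨le_trans hs₁s₃ (le_of_lt ht.1), le_of_lt ht.2⟩, by simpa using hwt⟩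
    exact absurd (hub this) (not_le.mpr ht.1)
  have hws' : w s ≤ w s₃ + (s₃ - s) := by
    apply anti_aux w hw _ hs₃s
    intro x hx
    exact hd x (le_trans (le_trans hs₁S hs₁s₃) (le_of_lt hx.1)) (le_of_lt (hpos x hx))
  linarith

set_option maxHeartbeats 1000000 in
theorem stmt_12 (n : ℕ) (hn : 3 ≤ n) (m β : ℝ) (hm : 0 < m) (hm2 : m < ((n : ℝ) - 2) / n)
    (hm3 : m ≠ ((n : ℝ) - 2) / (n + 2)) (hβ : 0 < β)
    (h G : ℝ → ℝ) (hh : ContDiff ℝ 2 h)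
    (hG : Tendsto G atTop (nhds 0))
    (b₀ : ℝ)
    (hb₀ : b₀ = 2 * ((n : ℝ) - 1) * ((n : ℝ) - 2 - n * m) * ((n : ℝ) - 2 - (n + 2) * m)
      / ((1 - m) ^ 2 * β))
    (hode : ∀ s, deriv (deriv h) s
      + (2 * ((n : ℝ) - 2 - n * m) / (1 - m) * s + (β / ((n : ℝ) - 1)) * h s
         + ((n : ℝ) - 2 - (n + 2) * m) / (1 - m)) * deriv h s = G s - b₀)
    (hh' : Tendsto (deriv h) atTop (nhds 0))
    (hhs : Tendsto (fun s => h s / s) atTop (nhds 0)) :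
    Tendsto (fun s => h s / Real.log s) atTop
        (nhds (-(((n : ℝ) - 1) * ((n : ℝ) - 2 - (n + 2) * m)) / ((1 - m) * β))) ∧
      Tendsto (fun s => s * deriv h s) atTop
        (nhds (-(((n : ℝ) - 1) * ((n : ℝ) - 2 - (n + 2) * m)) / ((1 - m) * β))) := by
  have hn3 : (3:ℝ) ≤ (n:ℝ) := by exact_mod_cast hn
  have hnpos : (0:ℝ) < n := by linarith
  have hnm : (n:ℝ) * m < (n:ℝ) - 2 := by
    have := (lt_div_iff₀ hnpos).mp hm2
    linarith [this]
  have hm1 : m < 1 := by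
    have h1 : ((n:ℝ) - 2) / n < 1 := (div_lt_one hnpos).mpr (by linarith)
    linarith
  have h1m : (0:ℝ) < 1 - m := by linarith
  have hn1 : (0:ℝ) < (n:ℝ) - 1 := by linarith
  set a : ℝ := 2 * ((n : ℝ) - 2 - n * m) / (1 - m) with ha_def
  set k : ℝ := β / ((n : ℝ) - 1) with hk_def
  set c : ℝ := ((n : ℝ) - 2 - (n + 2) * m) / (1 - m) with hc_def
  set L : ℝ := -(((n : ℝ) - 1) * ((n : ℝ) - 2 - (n + 2) * m)) / ((1 - m) * β) with hL_def
  have ha : 0 < a := div_pos (by linarith) h1m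
  have hb : b₀ = -(a * L) := by
    rw [hb₀, ha_def, hL_def]
    field_simp
  clear_value a k c L
  -- differentiability
  have hd1 : Differentiable ℝ h := hh.differentiable (by norm_num)
  have hcd : ContDiff ℝ 1 (deriv h) := by
    have h2 : ContDiff ℝ ((1 : WithTop ℕ∞) + 1) h := by
      have e : ((1 : WithTop ℕ∞) + 1) = 2 := by norm_num
      rw [e]; exact hh
    exact (contDiff_succ_iff_deriv.mp h2).2.2
  have hd2 : Differentiable ℝ (deriv h) := hcd.differentiable one_ne_zero
  -- rearranged ODE
  have hode' : ∀ s, deriv (deriv h) s = G s - b₀ - (a * s + k * h s + c) * deriv h s := by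
    intro s
    linarith [hode s]
  -- derivative of s * deriv h s
  have hwd : ∀ s : ℝ, deriv (fun t => t * deriv h t) s = deriv h s + s * deriv (deriv h) s := by
    intro s
    rw [deriv_fun_mul differentiableAt_fun_id (hd2 s)]
    simp
  -- main claim : s * h'(s) → L
  have T2 : Tendsto (fun s => s * deriv h s) atTop (nhds L) := by
    rw [Metric.tendsto_nhds]
    intro ε hε
    set ε' : ℝ := ε / 2 with hε'_def
    have hε' : 0 < ε' := by positivity
    set δ : ℝ := a * ε' / (8 * (|L| + ε' + 1)) with hδ_def
    have hδpos : 0 < δ := div_pos (by positivity) (by positivity)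
    -- eventual bounds
    have E1 : ∀ᶠ s in atTop, |G s| < a * ε' / 2 := by
      have := Metric.tendsto_nhds.mp hG (a * ε' / 2) (by positivity)
      simpa [Real.dist_eq] using this
    have E2 : ∀ᶠ s in atTop, |deriv h s| < 1 := by
      have := Metric.tendsto_nhds.mp hh' 1 one_pos
      simpa [Real.dist_eq] using this
    have Ediv : Tendsto (fun s => (k * h s + c) / s) atTop (nhds 0) := by
      have h1 : Tendsto (fun s : ℝ => k * (h s / s) + c / s) atTop (nhds (k * 0 + 0)) :=
        (hhs.const_mul k).add (tendsto_const_nhds.div_atTop tendsto_id)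
      rw [mul_zero, add_zero] at h1
      refine h1.congr' ?_
      filter_upwards [eventually_gt_atTop (0:ℝ)] with s hs
      field_simp
    have E3 : ∀ᶠ s in atTop, |k * h s + c| / |s| < δ := by
      have := Metric.tendsto_nhds.mp Ediv δ hδpos
      simpa [Real.dist_eq, abs_div] using this
    have E4 : ∀ᶠ s in atTop, |k * h s + c| / |s| < a / 2 := by
      have := Metric.tendsto_nhds.mp Ediv (a/2) (by positivity)
      simpa [Real.dist_eq, abs_div] using this
    have E5 : ∀ᶠ s in atTop, (1:ℝ) ≤ s := eventually_ge_atTop 1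
    have E6 : ∀ᶠ s in atTop, 16 / (a * ε') ≤ s := eventually_ge_atTop _
    -- the key differential inequality
    have Hkey : ∀ᶠ s in atTop,
        (0 ≤ s * deriv h s - (L + ε') →
          deriv (fun t => t * deriv h t - (L + ε')) s ≤ -1) ∧
        (0 ≤ (L - ε') - s * deriv h s →
          deriv (fun t => (L - ε') - t * deriv h t) s ≤ -1) := by
      filter_upwards [E1, E2, E3, E4, E5, E6] with s hG' hh'' hδs hhalf hs1 hbig
      have hspos : (0:ℝ) < s := lt_of_lt_of_le one_pos hs1
      rw [abs_of_pos hspos, div_lt_iff₀ hspos] at hδs hhalf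
      have hqlow : -(a / 2 * s) ≤ k * h s + c := by
        have := neg_abs_le (k * h s + c)
        linarith
      have hp : a / 2 * s ≤ a * s + k * h s + c := by linarith
      have hppos : 0 < a * s + k * h s + c := lt_of_lt_of_le (by positivity) hp
      have haeps : 16 ≤ a * ε' * s := by
        rw [div_le_iff₀ (by positivity)] at hbig
        linarith
      have hq : ∀ r : ℝ, |r| ≤ |L| + ε' + 1 → |(k * h s + c) * r| ≤ a * ε' / 8 * s := by
        intro r hr
        have h1 : |(k * h s + c) * r| ≤ (δ * s) * (|L| + ε' + 1) := by
          rw [abs_mul]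
          exact mul_le_mul hδs.le hr (abs_nonneg _) (by positivity)
        have h2 : (δ * s) * (|L| + ε' + 1) = a * ε' / 8 * s := by
          rw [hδ_def]
          field_simp
        linarith
      have hqP : |L + ε'| ≤ |L| + ε' + 1 := by
        calc |L + ε'| ≤ |L| + |ε'| := abs_add_le _ _
          _ ≤ |L| + ε' + 1 := by rw [abs_of_pos hε']; linarith
      have hqM : |L - ε'| ≤ |L| + ε' + 1 := by
        calc |L - ε'| ≤ |L| + |ε'| := abs_sub _ _
          _ ≤ |L| + ε' + 1 := by rw [abs_of_pos hε']; linarith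
      have habs' := abs_lt.mp hh''
      have hGs := abs_lt.mp hG'
      constructor
      · intro hws
        have hcalc : deriv (fun t => t * deriv h t - (L + ε')) s
            = deriv h s + s * G s - a * s * ε' - (k * h s + c) * (L + ε')
              - (a * s + k * h s + c) * (s * deriv h s - (L + ε')) := by
          rw [deriv_sub_const, hwd s, hode' s, hb]
          ring
        have t2 : s * G s ≤ a * ε' / 2 * s := by
          nlinarith [hGs.2, hspos]
        have t3 : -((k * h s + c) * (L + ε')) ≤ a * ε' / 8 * s := by
          have := hq (L + ε') hqP
          linarith [neg_abs_le ((k * h s + c) * (L + ε'))]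
        have t4 : 0 ≤ (a * s + k * h s + c) * (s * deriv h s - (L + ε')) :=
          mul_nonneg hppos.le hws
        rw [hcalc]
        nlinarith [habs'.2]
      · intro hws
        have hcalc : deriv (fun t => (L - ε') - t * deriv h t) s
            = -deriv h s - s * G s - a * s * ε' + (k * h s + c) * (L - ε')
              - (a * s + k * h s + c) * ((L - ε') - s * deriv h s) := by
          rw [deriv_const_sub, hwd s, hode' s, hb]
          ring
        have t2 : -(s * G s) ≤ a * ε' / 2 * s := by
          nlinarith [hGs.1, hspos]
        have t3 : (k * h s + c) * (L - ε') ≤ a * ε' / 8 * s := by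
          have := hq (L - ε') hqM
          linarith [le_abs_self ((k * h s + c) * (L - ε'))]
        have t4 : 0 ≤ (a * s + k * h s + c) * ((L - ε') - s * deriv h s) :=
          mul_nonneg hppos.le hws
        rw [hcalc]
        nlinarith [habs'.1]
    obtain ⟨S, hS⟩ := eventually_atTop.mp Hkey
    have hw1 : Differentiable ℝ (fun t => t * deriv h t - (L + ε')) :=
      (differentiable_id.mul hd2).sub_const _
    have hw2 : Differentiable ℝ (fun t => (L - ε') - t * deriv h t) :=
      (differentiable_const _).sub (differentiable_id.mul hd2)
    have B1 := barrier _ hw1 S (fun s hs => (hS s hs).1)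
    have B2 := barrier _ hw2 S (fun s hs => (hS s hs).2)
    filter_upwards [B1, B2] with s h1 h2
    rw [Real.dist_eq, abs_sub_lt_iff]
    constructor <;> · simp only [hε'_def] at h1 h2; linarith
  refine ⟨?_, T2⟩
  -- transfer to h s / log s
  rw [Metric.tendsto_nhds]
  intro ε hε
  set ε' : ℝ := ε / 4 with hε'_def
  have hε' : 0 < ε' := by positivity
  obtain ⟨S₀, hS₀⟩ := eventually_atTop.mp (Metric.tendsto_nhds.mp T2 ε' hε')
  set s₀ : ℝ := max S₀ 2 with hs₀def
  have hs₀2 : (2:ℝ) ≤ s₀ := le_max_right _ _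
  have hs₀pos : (0:ℝ) < s₀ := by linarith
  have hbound : ∀ x, s₀ ≤ x → |x * deriv h x - L| < ε' := by
    intro x hx
    have := hS₀ x (le_trans (le_max_left _ _) hx)
    rwa [Real.dist_eq] at this
  -- upper comparison
  have hup : ∀ s, s₀ ≤ s → h s - (L + ε') * Real.log s ≤ h s₀ - (L + ε') * Real.log s₀ := by
    intro s hs
    have hanti : AntitoneOn (fun t => h t - (L + ε') * Real.log t) (Set.Ici s₀) := by
      apply antitoneOn_of_deriv_nonpos (convex_Ici s₀)
      · apply (hd1.continuous.continuousOn).sub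
        exact continuousOn_const.mul (Real.continuousOn_log.mono
          (fun x hx => ne_of_gt (lt_of_lt_of_le hs₀pos hx)))
      · intro x hx
        rw [interior_Ici] at hx
        have hx0 : (0:ℝ) < x := lt_trans hs₀pos hx
        exact ((hd1 x).sub ((Real.differentiableAt_log hx0.ne').const_mul _)).differentiableWithinAt
      · intro x hx
        rw [interior_Ici] at hx
        have hx0 : (0:ℝ) < x := lt_trans hs₀pos hx
        have hder : deriv (fun t => h t - (L + ε') * Real.log t) x
            = deriv h x - (L + ε') * x⁻¹ := by
          rw [deriv_fun_sub (hd1 x) ((Real.differentiableAt_log hx0.ne').const_mul _),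
            deriv_const_mul _ (Real.differentiableAt_log hx0.ne'), Real.deriv_log]
        rw [hder, sub_nonpos, ← div_eq_mul_inv, le_div_iff₀ hx0]
        have := abs_lt.mp (hbound x hx.le)
        linarith
    exact hanti (Set.self_mem_Ici) hs hs
  -- lower comparison
  have hlo : ∀ s, s₀ ≤ s → h s₀ - (L - ε') * Real.log s₀ ≤ h s - (L - ε') * Real.log s := by
    intro s hs
    have hmono : MonotoneOn (fun t => h t - (L - ε') * Real.log t) (Set.Ici s₀) := by
      apply monotoneOn_of_deriv_nonneg (convex_Ici s₀)
      · apply (hd1.continuous.continuousOn).sub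
        exact continuousOn_const.mul (Real.continuousOn_log.mono
          (fun x hx => ne_of_gt (lt_of_lt_of_le hs₀pos hx)))
      · intro x hx
        rw [interior_Ici] at hx
        have hx0 : (0:ℝ) < x := lt_trans hs₀pos hx
        exact ((hd1 x).sub ((Real.differentiableAt_log hx0.ne').const_mul _)).differentiableWithinAt
      · intro x hx
        rw [interior_Ici] at hx
        have hx0 : (0:ℝ) < x := lt_trans hs₀pos hx
        have hder : deriv (fun t => h t - (L - ε') * Real.log t) x
            = deriv h x - (L - ε') * x⁻¹ := by
          rw [deriv_fun_sub (hd1 x) ((Real.differentiableAt_log hx0.ne').const_mul _),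
            deriv_const_mul _ (Real.differentiableAt_log hx0.ne'), Real.deriv_log]
        rw [hder, sub_nonneg, ← div_eq_mul_inv, div_le_iff₀ hx0]
        have := abs_lt.mp (hbound x hx.le)
        linarith
    exact hmono (Set.self_mem_Ici) hs hs
  set C : ℝ := |h s₀ - (L + ε') * Real.log s₀| + |h s₀ - (L - ε') * Real.log s₀| + 1 with hC_def
  have hCpos : 0 < C := by positivity
  filter_upwards [eventually_ge_atTop s₀,
    Real.tendsto_log_atTop.eventually_ge_atTop (max 1 (C / ε'))] with s hs hlog
  have hlog1 : (1:ℝ) ≤ Real.log s := le_trans (le_max_left _ _) hlog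
  have hlogpos : (0:ℝ) < Real.log s := by linarith
  have hCl : C ≤ ε' * Real.log s := by
    have h1 : C / ε' ≤ Real.log s := le_trans (le_max_right _ _) hlog
    rw [div_le_iff₀ hε'] at h1
    linarith
  have hu := hup s hs
  have hl := hlo s hs
  have habs : |h s - L * Real.log s| ≤ C + ε' * Real.log s := by
    rw [abs_le]
    constructor
    · have := neg_abs_le (h s₀ - (L - ε') * Real.log s₀)
      have h2 : 0 ≤ |h s₀ - (L + ε') * Real.log s₀| := abs_nonneg _
      nlinarith
    · have := le_abs_self (h s₀ - (L + ε') * Real.log s₀)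
      have h2 : 0 ≤ |h s₀ - (L - ε') * Real.log s₀| := abs_nonneg _
      nlinarith
  rw [Real.dist_eq]
  have heq : h s / Real.log s - L = (h s - L * Real.log s) / Real.log s := by
    field_simp
  rw [heq, abs_div, abs_of_pos hlogpos, div_lt_iff₀ hlogpos]
  have hεs : ε' * Real.log s + C < ε * Real.log s := by
    have : 4 * ε' = ε := by rw [hε'_def]; ring
    nlinarith
  linarith
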